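/- There exists a universal constant c > 0 such that for every pair of positive integers m and d and every δ ∈ (0, 1/2), there is a probability measure μ on the space of real m × d matrices with the property that for every fixed vector x ∈ ℝ^d, the set of matrices A satisfying |‖Ax‖₂² − ‖x‖₂²| ≤ c·√(log(1/δ)/m)·‖x‖₂² has μ-measure at least 1 − δ. -/

import Mathlib

open MeasureTheory Matrix
open scoped ENNReal

/-- The Euclidean norm of a real vector. -/
noncomputable def euclNorm {d : ℕ} (x : Fin d → ℝ) : ℝ := Real.sqrt (∑ i, x i ^ 2)

section JLAux

open ProbabilityTheory Real

lemma pdf_conv_identity (a b : NNReal) (ha : (0:ℝ) < a) (hb : (0:ℝ) < b) (x y : ℝ) :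
    gaussianPDFReal 0 a x * gaussianPDFReal y b x
      = gaussianPDFReal 0 (a+b) y * gaussianPDFReal ((a:ℝ)*y/((a:ℝ)+b)) (a*b/(a+b)) x := by
  have hab : (0:ℝ) < (a:ℝ) + b := by linarith
  have hπ := Real.pi_pos
  simp only [gaussianPDFReal, NNReal.coe_add, NNReal.coe_mul, NNReal.coe_div]
  rw [mul_mul_mul_comm, mul_mul_mul_comm ((√(2 * π * ((a:ℝ)+(b:ℝ))))⁻¹)]
  congr 1
  · rw [← mul_inv, ← mul_inv, ← Real.sqrt_mul (by positivity), ← Real.sqrt_mul (by positivity)]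
    congr 2
    field_simp
  · rw [← Real.exp_add, ← Real.exp_add]
    congr 1
    field_simp
    ring

lemma gaussianPDFReal_symm (v : NNReal) (x y : ℝ) :
    gaussianPDFReal x v y = gaussianPDFReal y v x := by
  simp only [gaussianPDFReal]
  ring_nf

lemma gauss_conv (a b : NNReal) :
    Measure.map (fun p : ℝ × ℝ => p.1 + p.2) ((gaussianReal 0 a).prod (gaussianReal 0 b))
      = gaussianReal 0 (a+b) := by
  rcases eq_or_ne a 0 with rfl | ha
  · rw [gaussianReal_zero_var, Measure.dirac_prod,
      Measure.map_map (by fun_prop) (by fun_prop)]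
    have : ((fun p : ℝ × ℝ => p.1 + p.2) ∘ (Prod.mk (0:ℝ))) = fun y : ℝ => y + 0 := by
      funext y; simp [Function.comp, add_comm]
    rw [this]
    simpa using gaussianReal_map_add_const (μ := 0) (v := b) 0
  rcases eq_or_ne b 0 with rfl | hb
  · rw [gaussianReal_zero_var, Measure.prod_dirac,
      Measure.map_map (by fun_prop) (by fun_prop)]
    have : ((fun p : ℝ × ℝ => p.1 + p.2) ∘ (fun x : ℝ => (x, (0:ℝ)))) = fun y : ℝ => y + 0 := by
      funext y; simp [Function.comp]
    rw [this]
    simpa using gaussianReal_map_add_const (μ := 0) (v := a) 0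
  -- main case
  have ha' : (0:ℝ) < a := lt_of_le_of_ne (a.coe_nonneg) (by exact_mod_cast (Ne.symm ha))
  have hb' : (0:ℝ) < b := lt_of_le_of_ne (b.coe_nonneg) (by exact_mod_cast (Ne.symm hb))
  have hab : a + b ≠ 0 := by positivity
  have hGm : Measurable (Function.uncurry (fun x y : ℝ => gaussianPDF x b y)) := by
    simp only [gaussianPDF, gaussianPDFReal, Function.uncurry]
    fun_prop
  ext s hs
  rw [Measure.map_apply (by fun_prop) hs,
    Measure.prod_apply (hs.preimage (by fun_prop))]
  have key : ∀ x : ℝ, (gaussianReal 0 b) (Prod.mk x ⁻¹' ((fun p : ℝ × ℝ => p.1 + p.2) ⁻¹' s))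
      = ∫⁻ y in s, gaussianPDF x b y := by
    intro x
    have h1 : Prod.mk x ⁻¹' ((fun p : ℝ × ℝ => p.1 + p.2) ⁻¹' s) = (fun y => x + y) ⁻¹' s := rfl
    rw [h1, ← Measure.map_apply (by fun_prop) hs, gaussianReal_map_const_add x]
    rw [gaussianReal_apply _ hb]
    simp
  simp_rw [key]
  rw [gaussianReal_of_var_ne_zero 0 ha,
    lintegral_withDensity_eq_lintegral_mul _ (measurable_gaussianPDF 0 a)
      (Measurable.lintegral_prod_right hGm)]
  simp only [Pi.mul_apply]
  have hpull : ∀ x : ℝ, gaussianPDF 0 a x * ∫⁻ y in s, gaussianPDF x b y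
      = ∫⁻ y in s, gaussianPDF 0 a x * gaussianPDF x b y := by
    intro x
    exact (lintegral_const_mul' _ _ (by simp [gaussianPDF])).symm
  simp_rw [hpull]
  rw [lintegral_lintegral_swap (by
    apply Measurable.aemeasurable
    exact ((measurable_gaussianPDF 0 a).comp measurable_fst).mul hGm)]
  have inner : ∀ y : ℝ, ∫⁻ x, gaussianPDF 0 a x * gaussianPDF x b y ∂volume
      = gaussianPDF 0 (a+b) y := by
    intro y
    have hpt : ∀ x, gaussianPDF 0 a x * gaussianPDF x b y
        = gaussianPDF 0 (a+b) y * gaussianPDF ((a:ℝ)*y/((a:ℝ)+b)) (a*b/(a+b)) x := by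
      intro x
      simp only [gaussianPDF]
      rw [← ENNReal.ofReal_mul (gaussianPDFReal_nonneg _ _ _),
        ← ENNReal.ofReal_mul (gaussianPDFReal_nonneg _ _ _),
        gaussianPDFReal_symm b x y, pdf_conv_identity a b ha' hb' x y]
    simp_rw [hpt]
    rw [lintegral_const_mul' _ _ (by simp [gaussianPDF]),
      lintegral_gaussianPDF_eq_one _ (by positivity), mul_one]
  simp_rw [inner]
  rw [← gaussianReal_apply 0 hab s]



lemma gauss_sum_law (v : NNReal) :
    ∀ (n : ℕ) (x : Fin n → ℝ) (V : NNReal), ((V:ℝ) = (∑ j, (x j)^2) * v) →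
      Measure.map (fun g : Fin n → ℝ => ∑ j, x j * g j) (Measure.pi fun _ => gaussianReal 0 v)
        = gaussianReal 0 V := by
  intro n
  induction n with
  | zero =>
    intro x V hV
    have hV0 : V = 0 := by
      ext; simp at hV; simp [hV]
    have : (fun g : Fin 0 → ℝ => ∑ j, x j * g j) = fun _ => (0:ℝ) := by
      funext g; simp
    rw [this, Measure.map_const, hV0]
    simp [gaussianReal_zero_var]
  | succ n ih =>
    intro x V hV
    set e := MeasurableEquiv.piFinSuccAbove (fun _ : Fin (n+1) => ℝ) 0 with he
    have mp := (measurePreserving_piFinSuccAbove (fun _ : Fin (n+1) => gaussianReal 0 v) 0)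
    have hpi : Measure.pi (fun _ : Fin (n+1) => gaussianReal 0 v)
        = Measure.map e.symm ((gaussianReal 0 v).prod (Measure.pi fun _ : Fin n => gaussianReal 0 v)) :=
      (mp.symm e).map_eq.symm
    rw [hpi, Measure.map_map (by fun_prop) (by fun_prop)]
    have hcomp : ((fun g : Fin (n+1) → ℝ => ∑ j, x j * g j) ∘ e.symm)
        = (fun p : ℝ × ℝ => p.1 + p.2) ∘
            (Prod.map (fun y : ℝ => x 0 * y) (fun z : Fin n → ℝ => ∑ j, x j.succ * z j)) := by
      funext p
      simp only [Function.comp, he, MeasurableEquiv.piFinSuccAbove_symm_apply, Prod.map]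
      rw [Fin.sum_univ_succ]
      simp [Fin.insertNth_zero]
    set W : NNReal := ⟨(∑ j : Fin n, (x j.succ)^2) * v, by positivity⟩ with hW
    rw [hcomp, ← Measure.map_map (by fun_prop) (by fun_prop),
      ← Measure.map_prod_map _ _ (by fun_prop) (by fun_prop),
      gaussianReal_map_const_mul (x 0), ih (fun j => x j.succ) W rfl,
      mul_zero, gauss_conv]
    congr 1
    ext
    rw [hV]
    push_cast
    rw [Fin.sum_univ_succ, add_mul]
    rfl

lemma lintegral_pi_prod {n : ℕ} {α : Type*} [MeasurableSpace α] (ν : Measure α)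
    [IsProbabilityMeasure ν] (f : α → ENNReal) (hf : Measurable f) :
    ∫⁻ ω : Fin n → α, ∏ i, f (ω i) ∂(Measure.pi fun _ => ν) = (∫⁻ a, f a ∂ν) ^ n := by
  induction n with
  | zero =>
    simp only [Finset.univ_eq_empty, Finset.prod_empty, pow_zero]
    simp
  | succ n ih =>
    set e := MeasurableEquiv.piFinSuccAbove (fun _ : Fin (n+1) => α) 0 with he
    have mp := (measurePreserving_piFinSuccAbove (fun _ : Fin (n+1) => ν) 0)
    have hpi : Measure.pi (fun _ : Fin (n+1) => ν)
        = Measure.map e.symm (ν.prod (Measure.pi fun _ : Fin n => ν)) :=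
      (mp.symm e).map_eq.symm
    have hprodmeas : Measurable (fun z : Fin n → α => ∏ j, f (z j)) := by
      apply Finset.measurable_prod
      intro i _
      exact hf.comp (measurable_pi_apply i)
    rw [hpi, lintegral_map (by
        apply Finset.measurable_prod
        intro i _
        exact hf.comp (measurable_pi_apply i)) (by fun_prop)]
    have hcomp : ∀ p : α × (Fin n → α), (∏ i, f (e.symm p i)) = f p.1 * ∏ j : Fin n, f (p.2 j) := by
      intro p
      rw [Fin.prod_univ_succ]
      simp [he, MeasurableEquiv.piFinSuccAbove_symm_apply, Fin.insertNth_zero]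
    simp_rw [hcomp]
    have hstep : (∫⁻ a : α × (Fin n → α), f a.1 * ∏ j, f (a.2 j)
          ∂ν.prod (Measure.pi fun _ : Fin n => ν))
        = (∫⁻ a, f a ∂ν) * ∫⁻ ω : Fin n → α, ∏ j, f (ω j) ∂(Measure.pi fun _ : Fin n => ν) :=
      lintegral_prod_mul hf.aemeasurable hprodmeas.aemeasurable
    rw [hstep, ih, pow_succ]
    ring


lemma aux_id (V t u : ℝ) (hV : 0 < V) (h1 : 0 < 1-2*t*V) :
    (√(2*π*V))⁻¹ * rexp (-(u-0)^2/(2*V)) * rexp (t*u^2)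
      = (√(1-2*t*V))⁻¹ * ((√(2*π*(V/(1-2*t*V))))⁻¹ * rexp (-(u-0)^2/(2*(V/(1-2*t*V))))) := by
  have hπ := Real.pi_pos
  rw [mul_assoc, ← Real.exp_add, ← mul_assoc, ← mul_inv, ← Real.sqrt_mul h1.le,
    show (1-2*t*V) * (2*π*(V/(1-2*t*V))) = 2*π*V by field_simp,
    show -(u-0)^2/(2*V) + t*u^2 = -(u-0)^2/(2*(V/(1-2*t*V))) by field_simp; ring]

/-- mgf of the square of a centered Gaussian. -/
lemma gauss_sq_mgf (V : NNReal) (t : ℝ) (ht : 2 * t * V < 1) :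
    ∫⁻ u, ENNReal.ofReal (rexp (t * u^2)) ∂(gaussianReal 0 V)
      = ENNReal.ofReal ((Real.sqrt (1 - 2*t*V))⁻¹) := by
  rcases eq_or_ne V 0 with rfl | hV
  · simp [gaussianReal_zero_var, lintegral_dirac]
  have hVpos : (0:ℝ) < V := lt_of_le_of_ne V.coe_nonneg (by exact_mod_cast (Ne.symm hV))
  have h1 : (0:ℝ) < 1 - 2*t*V := by linarith
  set W : NNReal := ⟨(V:ℝ)/(1-2*t*V), by positivity⟩ with hWdef
  have hW : W ≠ 0 := by
    rw [← NNReal.coe_ne_zero, hWdef]; show (V:ℝ)/(1-2*t*V) ≠ 0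
    positivity
  rw [gaussianReal_of_var_ne_zero 0 hV,
    lintegral_withDensity_eq_lintegral_mul _ (measurable_gaussianPDF 0 V) (by fun_prop)]
  have hpt : ∀ u : ℝ, (gaussianPDF 0 V * fun u => ENNReal.ofReal (rexp (t * u^2))) u
      = ENNReal.ofReal ((Real.sqrt (1-2*t*V))⁻¹) * gaussianPDF 0 W u := by
    intro u
    simp only [Pi.mul_apply, gaussianPDF]
    rw [← ENNReal.ofReal_mul (gaussianPDFReal_nonneg _ _ _),
        ← ENNReal.ofReal_mul (by positivity)]
    congr 1
    simp only [gaussianPDFReal, hWdef, NNReal.coe_mk]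
    exact aux_id V t u hVpos h1
  simp_rw [hpt]
  rw [lintegral_const_mul' _ _ ENNReal.ofReal_ne_top, lintegral_gaussianPDF_eq_one _ hW, mul_one]

/-- Chernoff bound, lintegral form. -/
lemma chernoff_aux {α : Type*} [MeasurableSpace α] (μ : Measure α) {S : α → ℝ}
    (hS : Measurable S) (t e : ℝ) :
    μ {ω | e ≤ t * S ω} ≤ ENNReal.ofReal (rexp (-e)) * ∫⁻ ω, ENNReal.ofReal (rexp (t * S ω)) ∂μ := by
  have hms : MeasurableSet {ω | e ≤ t * S ω} := measurableSet_le measurable_const (hS.const_mul t)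
  rw [← lintegral_indicator_one hms, ← lintegral_const_mul' _ _ ENNReal.ofReal_ne_top]
  apply lintegral_mono
  intro ω
  by_cases h : ω ∈ {ω | e ≤ t * S ω}
  · simp only [Set.indicator_of_mem h, Pi.one_apply]
    rw [← ENNReal.ofReal_mul (Real.exp_nonneg _), ← Real.exp_add]
    have h' : e ≤ t * S ω := h
    calc (1:ENNReal) = ENNReal.ofReal (rexp 0) := by simp
      _ ≤ ENNReal.ofReal (rexp (-e + t * S ω)) :=
          ENNReal.ofReal_le_ofReal (Real.exp_le_exp.2 (by linarith))
  · rw [Set.indicator_of_notMem h]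
    exact zero_le

lemma ineq_upper {s : ℝ} (h0 : 0 ≤ s) (h1 : s ≤ 1/2) :
    (Real.sqrt (1 - s))⁻¹ ≤ rexp (s/2 + s^2) := by
  have hs : (0:ℝ) < 1 - s := by linarith
  have key : 1 ≤ (1 - s) * rexp (s + 2*s^2) := by
    have he : (1 + (s + 2*s^2)/2)^2 ≤ rexp (s + 2*s^2) := by
      have h2 := Real.add_one_le_exp ((s + 2*s^2)/2)
      calc (1 + (s + 2*s^2)/2)^2 ≤ (rexp ((s + 2*s^2)/2))^2 := by
            apply pow_le_pow_left₀ (by positivity); linarith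
        _ = rexp (s + 2*s^2) := by rw [← Real.exp_nat_mul]; ring_nf
    nlinarith [sq_nonneg s, sq_nonneg (s*s)]
  have hsqrt : Real.sqrt (1 - s) * rexp (s/2 + s^2) ≥ 1 := by
    have hsq : (Real.sqrt (1 - s) * rexp (s/2 + s^2))^2 = (1-s) * rexp (s + 2*s^2) := by
      rw [mul_pow, Real.sq_sqrt (by linarith), ← Real.exp_nat_mul]
      ring_nf
    nlinarith [Real.sqrt_nonneg (1-s), Real.exp_pos (s/2 + s^2),
      mul_pos (Real.sqrt_pos.2 hs) (Real.exp_pos (s/2+s^2))]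
  rw [inv_le_iff_one_le_mul₀ (Real.sqrt_pos.2 hs)]
  linarith [hsqrt]

lemma ineq_lower {s : ℝ} (h0 : 0 ≤ s) (h1 : s ≤ 1/2) :
    (Real.sqrt (1 + s))⁻¹ ≤ rexp (-s/2 + s^2) := by
  have hs : (0:ℝ) < 1 + s := by linarith
  have key : 1 ≤ (1 + s) * rexp (-s + 2*s^2) := by
    have he : (-(s - 2*s^2)) + 1 ≤ rexp (-(s - 2*s^2)) := Real.add_one_le_exp _
    have hrw : rexp (-(s - 2*s^2)) = rexp (-s + 2*s^2) := by ring_nf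
    nlinarith [Real.exp_pos (-s + 2*s^2)]
  have hsqrt : Real.sqrt (1 + s) * rexp (-s/2 + s^2) ≥ 1 := by
    have hsq : (Real.sqrt (1 + s) * rexp (-s/2 + s^2))^2 = (1+s) * rexp (-s + 2*s^2) := by
      rw [mul_pow, Real.sq_sqrt (by linarith), ← Real.exp_nat_mul]
      ring_nf
    nlinarith [Real.sqrt_nonneg (1+s), Real.exp_pos (-s/2 + s^2),
      mul_pos (Real.sqrt_pos.2 hs) (Real.exp_pos (-s/2+s^2))]
  rw [inv_le_iff_one_le_mul₀ (Real.sqrt_pos.2 hs)]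
  linarith [hsqrt]

end JLAux

open ProbabilityTheory Real

set_option maxHeartbeats 1000000

/-- **Johnson–Lindenstrauss lemma.**  There is a universal constant `c > 0` such that for all
positive integers `m`, `d` and all `δ ∈ (0, 1/2)` there is a probability distribution on
`m × d` real matrices such that for every fixed `x ∈ ℝ^d`, with probability at least `1 - δ`,
`|‖Ax‖₂² - ‖x‖₂²| ≤ c √(log(1/δ)/m) ‖x‖₂²`. -/
theorem jl_lemma :
    ∃ c : ℝ, 0 < c ∧
      ∀ (m d : ℕ), 0 < m → 0 < d → ∀ δ : ℝ, 0 < δ → δ < 1 / 2 →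
        ∃ μ : Measure (Fin m → Fin d → ℝ), IsProbabilityMeasure μ ∧
          ∀ x : Fin d → ℝ,
            ENNReal.ofReal (1 - δ) ≤
              μ {A | |euclNorm ((Matrix.of A).mulVec x) ^ 2 - euclNorm x ^ 2| ≤
                  c * Real.sqrt (Real.log (1 / δ) / m) * euclNorm x ^ 2} := by
  refine ⟨8, by norm_num, ?_⟩
  intro m d hm hd δ hδ0 hδ2
  have hm0 : (0:ℝ) < m := Nat.cast_pos.2 hm
  set L : ℝ := Real.log (1/δ) with hLdef
  have hL : 0 < L := Real.log_pos (one_lt_one_div hδ0 (by linarith))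
  set ε : ℝ := 8 * Real.sqrt (L / m) with hεdef
  have hε0 : 0 < ε := by
    have : 0 < Real.sqrt (L/m) := Real.sqrt_pos.2 (by positivity)
    positivity
  by_cases hεbig : 1 ≤ ε
  · -- trivial case: Dirac at the zero matrix
    refine ⟨Measure.dirac 0, inferInstance, ?_⟩
    intro x
    have hKx : 0 ≤ euclNorm x ^ 2 := sq_nonneg _
    have hmem : (0 : Fin m → Fin d → ℝ) ∈
        {A | |euclNorm ((Matrix.of A).mulVec x) ^ 2 - euclNorm x ^ 2| ≤
          ε * euclNorm x ^ 2} := by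
      have hz : (Matrix.of (0 : Fin m → Fin d → ℝ)).mulVec x = 0 := by
        funext i
        simp [Matrix.mulVec, dotProduct]
      simp only [Set.mem_setOf_eq, hz]
      have h0 : euclNorm (0 : Fin m → ℝ) = 0 := by simp [euclNorm]
      rw [h0]
      rw [abs_of_nonpos (by nlinarith)]
      calc -(0^2 - euclNorm x ^2) = euclNorm x ^ 2 := by ring
        _ ≤ ε * euclNorm x ^ 2 := le_mul_of_one_le_left hKx hεbig
    rw [Measure.dirac_apply_of_mem hmem]
    exact ENNReal.ofReal_le_one.2 (by linarith)
  · push_neg at hεbig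
    set v : NNReal := (m:NNReal)⁻¹ with hvdef
    set ν : Measure (Fin d → ℝ) := Measure.pi (fun _ : Fin d => gaussianReal 0 v) with hνdef
    set μ : Measure (Fin m → Fin d → ℝ) := Measure.pi (fun _ : Fin m => ν) with hμdef
    refine ⟨μ, inferInstance, ?_⟩
    intro x
    set K : ℝ := ∑ j, x j ^ 2 with hKdef
    have hKnn : 0 ≤ K := by positivity
    have hKx : euclNorm x ^ 2 = K := Real.sq_sqrt (by positivity)
    set S : (Fin m → Fin d → ℝ) → ℝ := fun A => ∑ i, (∑ j, x j * A i j)^2 with hSdef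
    have hset : ∀ A : Fin m → Fin d → ℝ, euclNorm ((Matrix.of A).mulVec x) ^ 2 = S A := by
      intro A
      rw [euclNorm, Real.sq_sqrt (by positivity)]
      apply Finset.sum_congr rfl
      intro i _
      congr 1
      simp only [Matrix.mulVec, dotProduct, Matrix.of_apply]
      exact Finset.sum_congr rfl (fun j _ => mul_comm _ _)
    -- degenerate direction
    by_cases hKz : K = 0
    · have hx : ∀ j, x j = 0 := by
        intro j
        have hsum : ∑ j, x j ^ 2 = 0 := by rw [← hKdef]; exact hKz
        have h2 : x j ^ 2 = 0 :=
          (Finset.sum_eq_zero_iff_of_nonneg (fun j _ => sq_nonneg (x j))).1 hsum j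
            (Finset.mem_univ j)
        exact pow_eq_zero_iff two_ne_zero |>.1 h2
      have hTuniv : {A : Fin m → Fin d → ℝ | |euclNorm ((Matrix.of A).mulVec x) ^ 2 - euclNorm x ^ 2| ≤
          ε * euclNorm x ^ 2} = Set.univ := by
        apply Set.eq_univ_iff_forall.2
        intro A
        simp only [Set.mem_setOf_eq, hset, hKx]
        have hS0 : S A = 0 := by
          simp [hSdef, hx]
        rw [hS0, hKz]
        simp
      rw [hTuniv, measure_univ]
      exact ENNReal.ofReal_le_one.2 (by linarith)
    have hKpos : 0 < K := lt_of_le_of_ne hKnn (Ne.symm hKz)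
    -- measurability
    have hsumm : Measurable (fun r : Fin d → ℝ => ∑ j, x j * r j) := by
      apply Finset.measurable_sum
      intro j _
      exact Measurable.const_mul (f := fun r : Fin d → ℝ => r j) (measurable_pi_apply j) (x j)
    have hS : Measurable S := by
      apply Finset.measurable_sum
      intro i _
      exact ((hsumm.comp (measurable_pi_apply i)).pow_const 2)
    -- variance of a row sum
    set VK : NNReal := ⟨K * (m:ℝ)⁻¹, by positivity⟩ with hVKdef
    have hVKcoe : (VK:ℝ) = K * (m:ℝ)⁻¹ := rfl
    have hVKeq : (VK:ℝ) = (∑ j, (x j)^2) * (v:ℝ) := by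
      rw [hVKcoe, hvdef]
      push_cast
      rw [hKdef]
    -- row mgf
    have hrow : ∀ t : ℝ, 2*t*(VK:ℝ) < 1 →
        ∫⁻ r, ENNReal.ofReal (rexp (t * (∑ j, x j * r j)^2)) ∂ν
          = ENNReal.ofReal ((Real.sqrt (1 - 2*t*(VK:ℝ)))⁻¹) := by
      intro t ht
      have hF : Measurable (fun u : ℝ => ENNReal.ofReal (rexp (t * u^2))) := by fun_prop
      rw [hνdef, ← lintegral_map hF hsumm, gauss_sum_law v d x VK hVKeq]
      exact gauss_sq_mgf VK t ht
    -- full mgf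
    have hmgf : ∀ t : ℝ, 2*t*(VK:ℝ) < 1 →
        ∫⁻ A, ENNReal.ofReal (rexp (t * S A)) ∂μ
          = ENNReal.ofReal (((Real.sqrt (1 - 2*t*(VK:ℝ)))⁻¹)^m) := by
      intro t ht
      have hf : Measurable (fun r : Fin d → ℝ => ENNReal.ofReal (rexp (t * (∑ j, x j * r j)^2))) := by
        apply ENNReal.measurable_ofReal.comp
        exact Real.measurable_exp.comp ((hsumm.pow_const 2).const_mul t)
      have hpt : ∀ A : Fin m → Fin d → ℝ, ENNReal.ofReal (rexp (t * S A))
          = ∏ i, (fun r : Fin d → ℝ => ENNReal.ofReal (rexp (t * (∑ j, x j * r j)^2))) (A i) := by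
        intro A
        rw [hSdef]
        simp only
        rw [Finset.mul_sum, Real.exp_sum, ENNReal.ofReal_prod_of_nonneg
          (fun i _ => (Real.exp_pos _).le)]
      simp_rw [hpt]
      rw [hμdef, lintegral_pi_prod ν _ hf, hrow t ht,
        ← ENNReal.ofReal_pow (by positivity)]
    -- Chernoff
    have hcher : ∀ t e : ℝ, 2*t*(VK:ℝ) < 1 →
        μ {A | e ≤ t * S A} ≤ ENNReal.ofReal (rexp (-e) * ((Real.sqrt (1 - 2*t*(VK:ℝ)))⁻¹)^m) := by
      intro t e ht
      calc μ {A | e ≤ t * S A}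
          ≤ ENNReal.ofReal (rexp (-e)) * ∫⁻ A, ENNReal.ofReal (rexp (t * S A)) ∂μ :=
            chernoff_aux μ hS t e
        _ = ENNReal.ofReal (rexp (-e)) *
              ENNReal.ofReal (((Real.sqrt (1 - 2*t*(VK:ℝ)))⁻¹)^m) := by rw [hmgf t ht]
        _ = ENNReal.ofReal (rexp (-e) * ((Real.sqrt (1 - 2*t*(VK:ℝ)))⁻¹)^m) :=
            (ENNReal.ofReal_mul (Real.exp_nonneg _)).symm
    -- choose t
    set tp : ℝ := ε * m / (8 * K) with htpdef
    have htppos : 0 < tp := by positivity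
    have hsp : 2 * tp * (VK:ℝ) = ε/4 := by
      rw [htpdef, hVKcoe]
      field_simp
      ring
    have hsm : 2 * (-tp) * (VK:ℝ) = -(ε/4) := by
      rw [show (2:ℝ) * (-tp) * (VK:ℝ) = -(2 * tp * (VK:ℝ)) by ring, hsp]
    have hε4 : 0 ≤ ε/4 ∧ ε/4 ≤ 1/2 := ⟨by positivity, by linarith⟩
    have hεsq : ε^2 = 64 * (L/m) := by
      rw [hεdef, mul_pow, Real.sq_sqrt (by positivity)]
      norm_num
    have hexp4L : rexp (-(m * ε^2/16)) = δ^4 := by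
      have h1 : m * ε^2/16 = 4 * L := by
        rw [hεsq]; field_simp; ring
      have h2 : L = - Real.log δ := by rw [hLdef, one_div, Real.log_inv]
      rw [h1, h2]
      rw [show -(4 * -Real.log δ) = ((4:ℕ):ℝ) * Real.log δ by norm_num]
      rw [Real.exp_nat_mul, Real.exp_log hδ0]
    -- upper tail
    have hup : μ {A | tp * ((1+ε)*K) ≤ tp * S A} ≤ ENNReal.ofReal (δ^4) := by
      refine (hcher tp (tp * ((1+ε)*K)) (by rw [hsp]; linarith)).trans ?_
      apply ENNReal.ofReal_le_ofReal
      rw [hsp]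
      calc rexp (-(tp * ((1+ε)*K))) * ((Real.sqrt (1 - ε/4))⁻¹)^m
          ≤ rexp (-(tp * ((1+ε)*K))) * (rexp ((ε/4)/2 + (ε/4)^2))^m := by
            apply mul_le_mul_of_nonneg_left _ (Real.exp_nonneg _)
            exact pow_le_pow_left₀ (by positivity) (ineq_upper hε4.1 hε4.2) m
        _ = rexp (-(tp * ((1+ε)*K)) + m * ((ε/4)/2 + (ε/4)^2)) := by
            rw [← Real.exp_nat_mul, ← Real.exp_add]
        _ = rexp (-(m * ε^2/16)) := by
            congr 1
            rw [htpdef]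
            field_simp
            ring
        _ = δ^4 := hexp4L
    -- lower tail
    have hlo : μ {A | (-tp) * ((1-ε)*K) ≤ (-tp) * S A} ≤ ENNReal.ofReal (δ^4) := by
      refine (hcher (-tp) ((-tp) * ((1-ε)*K)) (by rw [hsm]; linarith)).trans ?_
      apply ENNReal.ofReal_le_ofReal
      rw [hsm, show (1 - -(ε/4)) = 1 + ε/4 by ring]
      calc rexp (-((-tp) * ((1-ε)*K))) * ((Real.sqrt (1 + ε/4))⁻¹)^m
          ≤ rexp (-((-tp) * ((1-ε)*K))) * (rexp (-(ε/4)/2 + (ε/4)^2))^m := by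
            apply mul_le_mul_of_nonneg_left _ (Real.exp_nonneg _)
            exact pow_le_pow_left₀ (by positivity) (ineq_lower hε4.1 hε4.2) m
        _ = rexp (-((-tp) * ((1-ε)*K)) + m * (-(ε/4)/2 + (ε/4)^2)) := by
            rw [← Real.exp_nat_mul, ← Real.exp_add]
        _ = rexp (-(m * ε^2/16)) := by
            congr 1
            rw [htpdef]
            field_simp
            ring
        _ = δ^4 := hexp4L
    -- combine
    set T : Set (Fin m → Fin d → ℝ) :=
      {A | |euclNorm ((Matrix.of A).mulVec x) ^ 2 - euclNorm x ^ 2| ≤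
        ε * euclNorm x ^ 2} with hTdef
    have hsub : Tᶜ ⊆ {A | tp * ((1+ε)*K) ≤ tp * S A} ∪ {A | (-tp) * ((1-ε)*K) ≤ (-tp) * S A} := by
      intro A hA
      simp only [hTdef, Set.mem_compl_iff, Set.mem_setOf_eq, hset, hKx, not_le] at hA
      have hA' : ε * K < |S A - K| := hA
      rcases lt_abs.1 hA' with h | h
      · left
        have : (1+ε) * K ≤ S A := by linarith
        exact mul_le_mul_of_nonneg_left this htppos.le
      · right
        have : S A ≤ (1-ε) * K := by linarith
        exact mul_le_mul_of_nonpos_left this (by linarith)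
    have hbad : μ Tᶜ ≤ ENNReal.ofReal δ := by
      calc μ Tᶜ ≤ μ ({A | tp * ((1+ε)*K) ≤ tp * S A} ∪ {A | (-tp) * ((1-ε)*K) ≤ (-tp) * S A}) :=
            measure_mono hsub
        _ ≤ μ {A | tp * ((1+ε)*K) ≤ tp * S A} + μ {A | (-tp) * ((1-ε)*K) ≤ (-tp) * S A} :=
            measure_union_le _ _
        _ ≤ ENNReal.ofReal (δ^4) + ENNReal.ofReal (δ^4) := add_le_add hup hlo
        _ = ENNReal.ofReal (δ^4 + δ^4) := (ENNReal.ofReal_add (by positivity) (by positivity)).symm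
        _ ≤ ENNReal.ofReal δ := ENNReal.ofReal_le_ofReal (by
              nlinarith [pow_le_pow_left₀ hδ0.le hδ2.le 3, hδ0.le])
    have huniv : (1:ℝ≥0∞) ≤ μ T + ENNReal.ofReal δ := by
      calc (1:ℝ≥0∞) = μ Set.univ := measure_univ.symm
        _ = μ (T ∪ Tᶜ) := by rw [Set.union_compl_self]
        _ ≤ μ T + μ Tᶜ := measure_union_le _ _
        _ ≤ μ T + ENNReal.ofReal δ := add_le_add le_rfl hbad
    have : ENNReal.ofReal (1-δ) + ENNReal.ofReal δ ≤ μ T + ENNReal.ofReal δ := by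
      rw [← ENNReal.ofReal_add (by linarith) hδ0.le, sub_add_cancel, ENNReal.ofReal_one]
      exact huniv
    exact (ENNReal.add_le_add_iff_right ENNReal.ofReal_ne_top).1 this
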